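/- Let G be a finite connected simple graph with an isometric embedding λ : V → ℤ^d in which every lattice coordinate attains at least two values (β_i > α_i for each i), and let μ : V → {0,1}^τ with τ = Σ_i (β_i − α_i) be the full-dimensional hypercube isometry constructed from λ. Then the semicube graph Sc(G) (taken with respect to μ) contains a matching M with |M| = τ − d. -/

import Mathlib

/-- The semicube `S_{i,χ} = {v | μ_i(v) = χ}` of a hypercube embedding `μ`. -/
def semicube {V ι : Type*} (μ : V → ι → Bool) (i : ι) (χ : Bool) : Set V :=
  {v | μ v i = χ}

/-- The semicube graph `Sc(G)`: vertices are the pairs `(i,χ)` (representing the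
semicubes `S_{i,χ}`), with an edge between two distinct pairs exactly when the
corresponding semicubes cover all vertices and intersect nontrivially. -/
def semicubeGraph {V ι : Type*} (μ : V → ι → Bool) : SimpleGraph (ι × Bool) where
  Adj p q := p ≠ q ∧
    semicube μ p.1 p.2 ∪ semicube μ q.1 q.2 = Set.univ ∧
    (semicube μ p.1 p.2 ∩ semicube μ q.1 q.2).Nonempty
  symm := by
    constructor
    rintro p q ⟨h1, h2, h3⟩
    exact ⟨h1.symm, by rwa [Set.union_comm], by rwa [Set.inter_comm]⟩
  loopless := by constructor; rintro p ⟨h1, -⟩; exact h1 rfl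

/-- `M` is a matching in the graph `H`: a finite set of edges of `H`,
no two of which share an endpoint. -/
def IsMatchingIn {α : Type*} (H : SimpleGraph α) (M : Finset (Sym2 α)) : Prop :=
  (∀ e ∈ M, e ∈ H.edgeSet) ∧
    ∀ e ∈ M, ∀ f ∈ M, e ≠ f → ∀ a, a ∈ e → a ∉ f

/-- The hypercube coordinate map constructed from a lattice embedding `lam`:
the coordinate indexed by `(i, k)` (i.e. `γ = α i + k`, `α i ≤ γ < β i`)
is `false` on `v` when `lam v i ≤ γ` and `true` otherwise. -/
def latticeToCubeMap {V : Type*} {d : ℕ} (lam : V → Fin d → ℤ) (α β : Fin d → ℤ)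
    (v : V) (j : Σ i : Fin d, Fin (β i - α i).toNat) : Bool :=
  decide (α j.1 + (j.2.1 : ℤ) < lam v j.1)

/-- **Lemma 3.** If `lam : V → ℤ^d` is an isometric embedding of a finite connected
graph `G` in which every coordinate attains at least two values, and
`μ = latticeToCubeMap lam α β : V → {0,1}^τ` with `τ = Σ_i (β_i − α_i)` is the
hypercube isometry constructed from it, then the semicube graph `Sc(G)` (taken
with respect to `μ`) contains a matching `M` with `|M| = τ − d`. -/
lemma card_filter_succ_lt (n : ℕ) :
    (Finset.univ.filter (fun k : Fin n => (k : ℕ) + 1 < n)).card = n - 1 := by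
  have h : (Finset.univ.filter (fun k : Fin n => (k : ℕ) + 1 < n)) =
      (Finset.univ : Finset (Fin (n - 1))).map
        ⟨Fin.castLE (Nat.sub_le n 1), Fin.castLE_injective _⟩ := by
    ext k
    simp only [Finset.mem_filter, Finset.mem_univ, true_and, Finset.mem_map,
      Function.Embedding.coeFn_mk]
    constructor
    · intro hk
      exact ⟨⟨k.1, by omega⟩, by ext; simp⟩
    · rintro ⟨a, rfl⟩
      have := a.2
      simp [Fin.castLE]
      omega
  rw [h, Finset.card_map, Finset.card_univ, Fintype.card_fin]

theorem matching_from_lattice_embedding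
    {V : Type*} [Fintype V] [DecidableEq V]
    (G : SimpleGraph V) (hconn : G.Connected)
    (d : ℕ) (lam : V → Fin d → ℤ)
    (hiso : ∀ u v : V, ∑ i, |lam u i - lam v i| = (G.dist u v : ℤ))
    (α β : Fin d → ℤ)
    (hα : ∀ i, IsLeast (Set.range fun v => lam v i) (α i))
    (hβ : ∀ i, IsGreatest (Set.range fun v => lam v i) (β i))
    (hfull : ∀ i, α i < β i) :
    ∃ M : Finset (Sym2 ((Σ i : Fin d, Fin (β i - α i).toNat) × Bool)),
      IsMatchingIn (semicubeGraph (latticeToCubeMap lam α β)) M ∧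
      d ≤ ∑ i, (β i - α i).toNat ∧
      M.card = (∑ i, (β i - α i).toNat) - d := by
  classical
  set n : Fin d → ℕ := fun i => (β i - α i).toNat with hn
  have hnpos : ∀ i, 0 < n i := by
    intro i
    have := hfull i
    simp only [hn]
    omega
  -- each adjacent pair differs by at most 1 in each coordinate
  have hstep : ∀ (i : Fin d) (u v : V), G.Adj u v → |lam u i - lam v i| ≤ 1 := by
    intro i u v huv
    have hd : G.dist u v = 1 := SimpleGraph.dist_eq_one_iff_adj.mpr huv
    have hsum := hiso u v
    rw [hd] at hsum
    calc |lam u i - lam v i| ≤ ∑ j, |lam u j - lam v j| :=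
          Finset.single_le_sum (f := fun j => |lam u j - lam v j|)
            (fun j _ => abs_nonneg _) (Finset.mem_univ i)
      _ = 1 := by rw [hsum]; norm_num
  -- intermediate value property
  have hivt : ∀ (i : Fin d) (γ : ℤ), α i ≤ γ → γ ≤ β i → ∃ v, lam v i = γ := by
    intro i γ h1 h2
    obtain ⟨u, hu⟩ := (hα i).1
    obtain ⟨w, hw⟩ := (hβ i).1
    have key : ∀ {a b : V} (_ : G.Walk a b), lam a i ≤ γ → γ ≤ lam b i →
        ∃ v, lam v i = γ := by
      intro a b p
      induction p with
      | nil => intro ha hb; exact ⟨_, le_antisymm ha hb⟩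
      
      | @cons a x b hax q ih =>
        intro ha hb
        rcases eq_or_lt_of_le ha with heq | hlt
        · exact ⟨a, heq⟩
        · have := hstep i a x hax
          have hx : lam x i ≤ γ := by
            rw [abs_le] at this
            omega
          exact ih hx hb
    obtain ⟨p⟩ := hconn.preconnected u w
    have hu' : lam u i = α i := hu
    have hw' : lam w i = β i := hw
    exact key p (by rw [hu']; exact h1) (by rw [hw']; exact h2)
  set J := (Σ i : Fin d, Fin (β i - α i).toNat) with hJ
  set μ := latticeToCubeMap lam α β with hμ
  -- the successor map
  have hsucc_lt : ∀ (j : J), ((j.2 : ℕ) + 1) % n j.1 < (β j.1 - α j.1).toNat :=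
    fun j => Nat.mod_lt _ (hnpos j.1)
  set succ : J → J := fun j => ⟨j.1, ⟨((j.2 : ℕ) + 1) % n j.1, hsucc_lt j⟩⟩ with hsucc
  set T : Finset J := Finset.univ.sigma
    (fun i => Finset.univ.filter (fun k : Fin (β i - α i).toNat => (k : ℕ) + 1 < n i))
    with hT
  have hmemT : ∀ j : J, j ∈ T ↔ (j.2 : ℕ) + 1 < n j.1 := by
    rintro ⟨i, k⟩
    rw [hT, Finset.mem_sigma, Finset.mem_filter]
    simp
  have hsuccT : ∀ j ∈ T, (succ j).1 = j.1 ∧ ((succ j).2 : ℕ) = (j.2 : ℕ) + 1 := by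
    intro j hj
    rw [hmemT] at hj
    exact ⟨rfl, Nat.mod_eq_of_lt hj⟩
  set f : J → Sym2 (J × Bool) := fun j => s((j, true), (succ j, false)) with hf
  refine ⟨T.image f, ⟨?_, ?_⟩, ?_, ?_⟩
  · -- edges are in the graph
    intro e he
    obtain ⟨j, hj, rfl⟩ := Finset.mem_image.mp he
    rw [hmemT] at hj
    have hmod : ((j.2 : ℕ) + 1) % n j.1 = (j.2 : ℕ) + 1 := Nat.mod_eq_of_lt hj
    rw [SimpleGraph.mem_edgeSet]
    refine ⟨by simp, ?_, ?_⟩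
    · ext v
      simp only [Set.mem_union, Set.mem_univ, iff_true, semicube, Set.mem_setOf_eq,
        hμ, latticeToCubeMap, hsucc, decide_eq_true_eq, decide_eq_false_iff_not]
      rw [hmod]
      push_cast
      omega
    · have hk : ((j.2 : ℕ) : ℤ) + 1 < β j.1 - α j.1 := by
        have h' : (j.2 : ℕ) + 1 < (β j.1 - α j.1).toNat := hj
        omega
      obtain ⟨v, hv⟩ := hivt j.1 (α j.1 + (j.2 : ℕ) + 1) (by omega) (by omega)
      refine ⟨v, ?_, ?_⟩ <;>
        simp only [semicube, Set.mem_setOf_eq, hμ, latticeToCubeMap, hsucc,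
          decide_eq_true_eq, decide_eq_false_iff_not]
      · omega
      · rw [hmod]
        push_cast
        omega
  · -- disjointness
    intro e he e' he' hne a hae hae'
    obtain ⟨j, hj, rfl⟩ := Finset.mem_image.mp he
    obtain ⟨j', hj', rfl⟩ := Finset.mem_image.mp he'
    simp only [hf, Sym2.mem_iff] at hae hae'
    have hinj : succ j = succ j' → j = j' := by
      intro h
      obtain ⟨ha1, ha2⟩ := hsuccT j hj
      obtain ⟨hb1, hb2⟩ := hsuccT j' hj'
      have h1 : j.1 = j'.1 := by
        have := congrArg Sigma.fst h
        simpa [ha1, hb1] using this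
      rcases j with ⟨i, k⟩
      rcases j' with ⟨i', k'⟩
      simp only at h1
      subst h1
      have h2 : ((succ ⟨i, k⟩).2 : ℕ) = ((succ ⟨i, k'⟩).2 : ℕ) := by rw [h]
      rw [ha2, hb2] at h2
      simp only at h2
      have hkk : k = k' := Fin.ext (by omega)
      rw [hkk]
    rcases hae with rfl | rfl <;> rcases hae' with h | h
    · have h1 : j = j' := (Prod.ext_iff.mp h).1
      exact hne (by rw [h1])
    · exact absurd (Prod.ext_iff.mp h).2 (by simp)
    · exact absurd (Prod.ext_iff.mp h).2 (by simp)
    · have h1 : succ j = succ j' := (Prod.ext_iff.mp h).1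
      exact hne (by rw [hinj h1])
  · -- d ≤ τ
    calc d = ∑ _i : Fin d, 1 := by simp
      _ ≤ ∑ i, (β i - α i).toNat := Finset.sum_le_sum (fun i _ => hnpos i)
  · -- cardinality
    have hcard_im : (T.image f).card = T.card := by
      apply Finset.card_image_of_injOn
      intro j _ j' _ h
      simp only [hf, Sym2.eq, Sym2.rel_iff', Prod.mk.injEq, Prod.swap_prod_mk] at h
      rcases h with ⟨⟨h1, -⟩, -⟩ | ⟨⟨-, h2⟩, -⟩
      · exact h1
      · simp at h2
    rw [hcard_im, hT, Finset.card_sigma]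
    have : ∀ i : Fin d,
        (Finset.univ.filter (fun k : Fin (β i - α i).toNat => (k : ℕ) + 1 < n i)).card
          = n i - 1 := fun i => card_filter_succ_lt (n i)
    rw [Finset.sum_congr rfl (fun i _ => this i)]
    rw [Finset.sum_tsub_distrib Finset.univ (fun i _ => hnpos i)]
    simp
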